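/- arXiv:1905.10543 — 7 statements merged into one kernel-verified Lean document; each statement's English description precedes it below -/
import Mathlib

section
/- Let E be a Banach lattice and X a Banach space. Every weakly compact operator T : E → X is a KB-operator, i.e., for every positive increasing sequence (x_n) in the closed unit ball of E, the sequence (T x_n) has a norm-convergent subsequence in X. -/
open Filter Topology Metric

lemma exists_seq_of_forall_exists (P : List ℕ → ℕ → Prop) (h : ∀ L, ∃ n, P L n) :
    ∃ m : ℕ → ℕ, ∀ l, P ((List.range l).map m) (m l) := by
  choose f hf using h
  let F : ℕ → List ℕ := fun l => Nat.rec [] (fun _ L => L ++ [f L]) l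
  have key : ∀ l, F l = (List.range l).map (fun l => f (F l)) := by
    intro l
    induction l with
    | zero => simp [F]
    | succ n ih =>
      have : F (n+1) = F n ++ [f (F n)] := rfl
      rw [this, List.range_succ, List.map_append, ← ih]
      rfl
  exact ⟨fun l => f (F l), fun l => by rw [← key]; exact hf (F l)⟩

/-- If a sequence in a complete metric space has no convergent subsequence, we can find
a uniformly separated subsequence. -/
lemma mem_le_foldr_max : ∀ (L : List ℕ), ∀ a ∈ L, a ≤ L.foldr max 0 := by
  intro L
  induction L with
  | nil => simp
  | cons b t ih =>
    intro a ha
    rcases List.mem_cons.1 ha with rfl | ht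
    · exact le_max_left _ _
    · exact le_trans (ih a ht) (le_max_right _ _)

lemma exists_separated_subseq {X : Type*} [MetricSpace X] [CompleteSpace X]
    (u : ℕ → X)
    (h : ¬ ∃ φ : ℕ → ℕ, StrictMono φ ∧ ∃ y : X, Tendsto (fun n => u (φ n)) atTop (nhds y)) :
    ∃ ε > 0, ∃ ψ : ℕ → ℕ, StrictMono ψ ∧ ∀ i j, i < j → ε ≤ dist (u (ψ j)) (u (ψ i)) := by
  -- range u is not totally bounded
  have hTB : ¬ TotallyBounded (Set.range u) := by
    intro htb
    have hclos : IsCompact (closure (Set.range u)) :=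
      TotallyBounded.isCompact_of_isClosed htb.closure isClosed_closure
    obtain ⟨y, -, φ, hφ, hconv⟩ :=
      hclos.tendsto_subseq (x := u) (fun n => subset_closure (Set.mem_range_self n))
    exact h ⟨φ, hφ, y, hconv⟩
  rw [Metric.totallyBounded_iff] at hTB
  push_neg at hTB
  obtain ⟨ε, hε, hnet⟩ := hTB
  refine ⟨ε, hε, ?_⟩
  have key : ∀ L : List ℕ, ∃ n, (∀ a ∈ L, a < n) ∧ ∀ a ∈ L, ε ≤ dist (u n) (u a) := by
    intro L
    by_contra hc
    push_neg at hc
    -- produce a finite ε-net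
    classical
    set N := L.foldr max 0 with hN
    have hLN : ∀ a ∈ L, a ≤ N := mem_le_foldr_max L
    have hfin : (u '' Set.Iic N).Finite := (Set.finite_Iic N).image u
    have hsub : Set.range u ⊆ ⋃ y ∈ u '' Set.Iic N, Metric.ball y ε := by
      rintro - ⟨n, rfl⟩
      by_cases hn : n ≤ N
      · exact Set.mem_biUnion ⟨n, hn, rfl⟩ (Metric.mem_ball_self hε)
      · push_neg at hn
        obtain ⟨a, haL, had⟩ := hc n (fun a ha => lt_of_le_of_lt (hLN a ha) hn)
        have haN : a ≤ N := hLN a haL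
        exact Set.mem_biUnion ⟨a, haN, rfl⟩ (by rw [Metric.mem_ball]; exact had)
    exact hnet _ hfin hsub
  obtain ⟨m, hm⟩ := exists_seq_of_forall_exists _ key
  have hmono : StrictMono m := strictMono_nat_of_lt_succ (fun l => by
    have := (hm (l+1)).1 (m l) (by simp [List.range_succ])
    exact this)
  refine ⟨m, hmono, fun i j hij => ?_⟩
  exact (hm j).2 (m i) (List.mem_map.2 ⟨i, List.mem_range.2 hij, rfl⟩)

lemma clusterPt_ge {s w : ℕ → ℝ} {L γ d : ℝ} (hL : MapClusterPt L atTop s)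
    (hw : Tendsto w atTop (nhds γ)) {N0 : ℕ} (hs : ∀ n, N0 ≤ n → w n + d ≤ s n) :
    γ + d ≤ L := by
  refine le_of_forall_pos_le_add (fun η hη => ?_)
  have hfreq : ∃ᶠ n in atTop, s n ∈ Metric.ball L (η/2) :=
    mapClusterPt_iff_frequently.1 hL _ (Metric.ball_mem_nhds _ (by linarith))
  have hev : ∀ᶠ n in atTop, |w n - γ| < η/2 ∧ N0 ≤ n := by
    filter_upwards [Metric.tendsto_nhds.1 hw (η/2) (by linarith), eventually_ge_atTop N0] with n h1 h2
    exact ⟨by simpa [Real.dist_eq] using h1, h2⟩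
  obtain ⟨n, hn1, hn2, hn3⟩ := (hfreq.and_eventually hev).exists
  have h1 : |s n - L| < η/2 := by simpa [Real.dist_eq] using hn1
  have := hs n hn3
  have h2 := abs_lt.1 h1
  have h3 := abs_lt.1 hn2
  linarith [h2.1, h2.2, h3.1, h3.2]

lemma clusterPt_abs_le {s w : ℕ → ℝ} {L γ d : ℝ} (hL : MapClusterPt L atTop s)
    (hw : Tendsto w atTop (nhds γ)) {N0 : ℕ} (hs : ∀ n, N0 ≤ n → |s n - w n| ≤ d) :
    |L - γ| ≤ d := by
  refine le_of_forall_pos_le_add (fun η hη => ?_)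
  have hfreq : ∃ᶠ n in atTop, s n ∈ Metric.ball L (η/2) :=
    mapClusterPt_iff_frequently.1 hL _ (Metric.ball_mem_nhds _ (by linarith))
  have hev : ∀ᶠ n in atTop, |w n - γ| < η/2 ∧ N0 ≤ n := by
    filter_upwards [Metric.tendsto_nhds.1 hw (η/2) (by linarith), eventually_ge_atTop N0] with n h1 h2
    exact ⟨by simpa [Real.dist_eq] using h1, h2⟩
  obtain ⟨n, hn1, hn2, hn3⟩ := (hfreq.and_eventually hev).exists
  have h1 : |s n - L| < η/2 := by simpa [Real.dist_eq] using hn1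
  have h4 := hs n hn3
  have h2 := abs_lt.1 h1
  have h3 := abs_lt.1 hn2
  have h5 := abs_le.1 h4
  rw [abs_le]
  constructor <;> linarith [h2.1, h2.2, h3.1, h3.2, h5.1, h5.2]

lemma eventually_list {α : Type*} {F : Filter α} (L : List ℕ) (p : ℕ → α → Prop)
    (h : ∀ a ∈ L, ∀ᶠ n in F, p a n) : ∀ᶠ n in F, ∀ a ∈ L, p a n := by
  induction L with
  | nil => simp
  | cons b t ih =>
    have hb := h b List.mem_cons_self
    have ht := ih (fun a ha => h a (List.mem_cons_of_mem b ha))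
    filter_upwards [hb, ht] with n h1 h2 a ha
    rcases List.mem_cons.1 ha with rfl | ha
    exacts [h1, h2 a ha]

/-- Every weakly compact operator from a Banach lattice into a Banach space is a
KB-operator: the image of every positive increasing sequence in the closed unit ball
has a norm convergent subsequence. -/
theorem weaklyCompact_isKB
    {E X : Type*} [NormedAddCommGroup E] [Lattice E] [IsOrderedAddMonoid E]
    [HasSolidNorm E] [NormedSpace ℝ E] [CompleteSpace E]
    [NormedAddCommGroup X] [NormedSpace ℝ X] [CompleteSpace X]
    (T : E →L[ℝ] X)
    (hT : IsCompact (closure (toWeakSpace ℝ X '' (T '' Metric.closedBall (0 : E) 1)))) :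
    ∀ x : ℕ → E, (∀ n, 0 ≤ x n) → Monotone x → (∀ n, ‖x n‖ ≤ 1) →
      ∃ φ : ℕ → ℕ, StrictMono φ ∧ ∃ y : X,
        Tendsto (fun n => T (x (φ n))) atTop (nhds y) := by
  intro x hpos hmono hnorm
  by_contra hcon
  obtain ⟨ε, hε, ψ, hψ, hsep⟩ := exists_separated_subseq (fun n => T (x n)) hcon
  -- the increments
  set v : ℕ → E := fun k => x (ψ (k+1)) - x (ψ k) with hv
  have hv0 : ∀ k, 0 ≤ v k := fun k => sub_nonneg.2 (hmono (hψ (Nat.lt_succ_self k)).le)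
  -- key norm bound for signed sums of increments
  have hkey : ∀ (F : Finset ℕ) (σ : ℕ → ℝ), (∀ j, σ j = 1 ∨ σ j = -1) →
      ‖∑ j ∈ F, σ j • v j‖ ≤ 1 := by
    intro F σ hσ
    set N := F.sup id with hN
    have hFsub : F ⊆ Finset.range (N+1) := fun j hj =>
      Finset.mem_range.2 (Nat.lt_succ_of_le (Finset.le_sup (f := id) hj))
    have hsum_le : ∑ j ∈ F, v j ≤ x (ψ (N+1)) := by
      have h1 : ∑ j ∈ F, v j ≤ ∑ j ∈ Finset.range (N+1), v j :=
        Finset.sum_le_sum_of_subset_of_nonneg hFsub (fun j _ _ => hv0 j)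
      have h2 : ∑ j ∈ Finset.range (N+1), v j = x (ψ (N+1)) - x (ψ 0) := by
        rw [hv]; exact Finset.sum_range_sub (fun k => x (ψ k)) (N+1)
      rw [h2] at h1
      exact h1.trans (sub_le_self _ (hpos _))
    have hterm : ∀ j, -(v j) ≤ σ j • v j ∧ σ j • v j ≤ v j := by
      intro j
      rcases hσ j with h | h
      · rw [h, one_smul]; exact ⟨neg_le_self (hv0 j), le_refl _⟩
      · rw [h, neg_one_smul]; exact ⟨le_refl _, neg_le_self (hv0 j)⟩
    have hup : ∑ j ∈ F, σ j • v j ≤ ∑ j ∈ F, v j :=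
      Finset.sum_le_sum (fun j _ => (hterm j).2)
    have hlo : -(∑ j ∈ F, v j) ≤ ∑ j ∈ F, σ j • v j := by
      rw [← Finset.sum_neg_distrib]
      exact Finset.sum_le_sum (fun j _ => (hterm j).1)
    have habs : |∑ j ∈ F, σ j • v j| ≤ |x (ψ (N+1))| := by
      rw [abs_of_nonneg (hpos _)]
      refine abs_le'.mpr ⟨hup.trans hsum_le, ?_⟩
      exact (neg_le.mp hlo).trans hsum_le
    exact (norm_le_norm_of_abs_le_abs habs).trans (hnorm _)
  -- separation of images
  have hTv : ∀ k, ε ≤ ‖T (v k)‖ := by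
    intro k
    have := hsep k (k+1) (Nat.lt_succ_self k)
    rw [dist_eq_norm] at this
    simpa [hv, map_sub] using this
  -- norming functionals
  have hfex : ∀ k, ∃ g : X →L[ℝ] ℝ, ‖g‖ = 1 ∧ g (T (v k)) = ‖T (v k)‖ := by
    intro k
    have hne : T (v k) ≠ 0 := by
      intro h0
      have := hTv k
      rw [h0, norm_zero] at this
      exact absurd this (not_le.2 hε)
    obtain ⟨g, hg1, hg2⟩ := exists_dual_vector ℝ (T (v k)) (norm_ne_zero_iff.2 hne)
    exact ⟨g, hg1, by exact_mod_cast hg2⟩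
  choose f hf1 hf2 using hfex
  set μ : ℕ → ℕ → ℝ := fun k j => f k (T (v j)) with hμ
  -- ℓ¹ bound
  have hμl1 : ∀ k (F : Finset ℕ), ∑ j ∈ F, |μ k j| ≤ ‖T‖ := by
    intro k F
    classical
    set σ : ℕ → ℝ := fun j => if 0 ≤ μ k j then 1 else -1 with hσdef
    have hσ : ∀ j, σ j = 1 ∨ σ j = -1 := fun j => by
      by_cases h : 0 ≤ μ k j <;> simp [hσdef, h]
    set w := ∑ j ∈ F, σ j • v j with hw
    have h1 : ∑ j ∈ F, |μ k j| = f k (T w) := by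
      rw [hw, map_sum, map_sum]
      refine Finset.sum_congr rfl (fun j _ => ?_)
      have hμj : μ k j = f k (T (v j)) := by rw [hμ]
      by_cases h : 0 ≤ μ k j
      · rw [map_smul, map_smul, hσdef]
        simp only [if_pos h, one_smul]
        rw [← hμj, abs_of_nonneg h]
      · push_neg at h
        rw [map_smul, map_smul, hσdef]
        simp only [if_neg (not_le.2 h)]
        rw [neg_one_smul, ← hμj]
        simp [abs_of_neg h]
    calc ∑ j ∈ F, |μ k j| = f k (T w) := h1
      _ ≤ |f k (T w)| := le_abs_self _
      _ ≤ ‖f k‖ * ‖T w‖ := by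
          simpa [Real.norm_eq_abs] using (f k).le_opNorm (T w)
      _ ≤ 1 * (‖T‖ * ‖w‖) := by
          rw [hf1 k, one_mul, one_mul]; exact T.le_opNorm w
      _ ≤ ‖T‖ := by
          rw [one_mul]
          calc ‖T‖ * ‖w‖ ≤ ‖T‖ * 1 :=
                mul_le_mul_of_nonneg_left (hkey F σ hσ) (norm_nonneg T)
            _ = ‖T‖ := mul_one _
  -- ultrafilter limits of columns
  obtain ⟨U, hU⟩ : ∃ U : Ultrafilter ℕ, ↑U ≤ (atTop : Filter ℕ) :=
    ⟨Ultrafilter.of atTop, Ultrafilter.of_le _⟩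
  have habs_bdd : ∀ k j, |μ k j| ≤ ‖T‖ := by
    intro k j
    have := hμl1 k {j}
    simpa using this
  have hbdd : ∀ j k, μ k j ∈ Set.Icc (-‖T‖) ‖T‖ := by
    intro j k
    have h := abs_le.1 (habs_bdd k j)
    exact ⟨h.1, h.2⟩
  have hcex : ∀ j, ∃ cj, cj ∈ Set.Icc (-‖T‖) ‖T‖ ∧
      Tendsto (fun k => μ k j) (↑U) (nhds cj) := by
    intro j
    obtain ⟨cj, hcj, hle⟩ := (isCompact_Icc (a := -‖T‖) (b := ‖T‖)).ultrafilter_le_nhds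
      (U.map (fun k => μ k j)) (by
        rw [Ultrafilter.coe_map]
        refine Filter.le_principal_iff.2 ?_
        rw [Filter.mem_map]
        exact Filter.mem_of_superset Filter.univ_mem (fun k _ => hbdd j k))
    exact ⟨cj, hcj, by rwa [Ultrafilter.coe_map] at hle⟩
  choose c hcIcc hctend using hcex
  have hcl1 : ∀ F : Finset ℕ, ∑ j ∈ F, |c j| ≤ ‖T‖ := by
    intro F
    have htend : Tendsto (fun k => ∑ j ∈ F, |μ k j|) (↑U) (nhds (∑ j ∈ F, |c j|)) :=
      tendsto_finset_sum _ (fun j _ => (hctend j).abs)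
    exact le_of_tendsto htend (Filter.Eventually.of_forall (fun k => hμl1 k F))
  have hsummc : Summable (fun j => |c j|) :=
    summable_of_sum_range_le (fun j => abs_nonneg _) (fun n => hcl1 (Finset.range n))
  have hc0 : Tendsto c atTop (nhds 0) := by
    rw [tendsto_zero_iff_norm_tendsto_zero]
    simpa [Real.norm_eq_abs] using hsummc.tendsto_atTop_zero
  have hμ0 : ∀ k, Tendsto (fun j => μ k j) atTop (nhds 0) := by
    intro k
    have hs : Summable (fun j => |μ k j|) :=
      summable_of_sum_range_le (fun j => abs_nonneg _) (fun n => hμl1 k (Finset.range n))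
    rw [tendsto_zero_iff_norm_tendsto_zero]
    simpa [Real.norm_eq_abs] using hs.tendsto_atTop_zero
  obtain ⟨k₀, hk₀⟩ : ∃ k₀, ∀ k, k₀ ≤ k → |c k| ≤ ε/2 := by
    have h := Metric.tendsto_nhds.1 hc0 (ε/2) (by linarith)
    rw [Filter.eventually_atTop] at h
    obtain ⟨k₀, hk₀⟩ := h.imp (fun k₀ hk₀ k hk => (hk₀ k hk).le)
    exact ⟨k₀, by simpa [Real.dist_eq] using hk₀⟩
  have hdiag : ∀ k, ε ≤ μ k k := by
    intro k
    have : μ k k = ‖T (v k)‖ := by rw [hμ]; exact hf2 k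
    rw [this]; exact hTv k
  -- recursive construction of the index sequence m
  have hex : ∀ L : List ℕ, ∃ n, ((∀ a ∈ L, a < n) ∧ k₀ ≤ n) ∧
      ((∀ a ∈ L, |μ n a - c a| ≤ ε * (1/2)^(L.length+5)) ∧
       (∀ a ∈ L, |μ a n - c n| ≤ ε * (1/2)^(L.length+5))) := by
    intro L
    have hηpos : (0:ℝ) < ε * (1/2)^(L.length+5) := by positivity
    have h1 : ∀ᶠ n in (↑U : Filter ℕ), ∀ a ∈ L, a < n := by
      refine hU ?_
      filter_upwards [eventually_gt_atTop (L.foldr max 0)] with n hn a ha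
      exact lt_of_le_of_lt (mem_le_foldr_max L a ha) hn
    have h2 : ∀ᶠ n in (↑U : Filter ℕ), k₀ ≤ n := hU (eventually_ge_atTop k₀)
    have h3 : ∀ᶠ n in (↑U : Filter ℕ), ∀ a ∈ L, |μ n a - c a| ≤ ε * (1/2)^(L.length+5) := by
      refine eventually_list L _ (fun a _ => ?_)
      have := Metric.tendsto_nhds.1 (hctend a) _ hηpos
      filter_upwards [this] with n hn
      rw [Real.dist_eq] at hn
      exact hn.le
    have h4 : ∀ᶠ n in (↑U : Filter ℕ), ∀ a ∈ L, |μ a n - c n| ≤ ε * (1/2)^(L.length+5) := by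
      refine eventually_list L _ (fun a _ => ?_)
      refine hU ?_
      have htd : Tendsto (fun n => μ a n - c n) atTop (nhds 0) := by
        simpa using (hμ0 a).sub hc0
      have := Metric.tendsto_nhds.1 htd _ hηpos
      filter_upwards [this] with n hn
      rw [Real.dist_eq, sub_zero] at hn
      exact hn.le
    obtain ⟨n, hn⟩ := ((h1.and h2).and (h3.and h4)).exists
    exact ⟨n, hn⟩
  obtain ⟨m, hm⟩ := exists_seq_of_forall_exists _ hex
  have hmmem : ∀ l i, i < l → m i ∈ (List.range l).map m :=
    fun l i h => List.mem_map.2 ⟨i, List.mem_range.2 h, rfl⟩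
  have hmmono : StrictMono m := strictMono_nat_of_lt_succ
    (fun l => (hm (l+1)).1.1 (m l) (hmmem _ l (Nat.lt_succ_self l)))
  have hmk₀ : ∀ l, k₀ ≤ m l := fun l => (hm l).1.2
  have hpast : ∀ l i, i < l → |μ (m l) (m i) - c (m i)| ≤ ε * (1/2)^(l+5) := by
    intro l i h
    have := (hm l).2.1 (m i) (hmmem l i h)
    simpa using this
  have hfut : ∀ l i, i < l → |μ (m i) (m l) - c (m l)| ≤ ε * (1/2)^(l+5) := by
    intro l i h
    have := (hm l).2.2 (m i) (hmmem l i h)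
    simpa using this
  -- off-diagonal bound
  have hoff : ∀ j n, ∑ i ∈ (Finset.range (n+1)).erase j, |μ (m j) (m i) - c (m i)|
      ≤ ε * (3/32) := by
    intro j n
    have hterm : ∀ i ∈ (Finset.range (n+1)).erase j,
        |μ (m j) (m i) - c (m i)| ≤ (if i < j then ε * (1/2)^(j+5) else 0) + ε * (1/2)^(i+5) := by
      intro i hi
      have hij : i ≠ j := Finset.ne_of_mem_erase hi
      rcases lt_trichotomy i j with h | h | h
      · rw [if_pos h]
        exact (hpast j i h).trans (le_add_of_nonneg_right (by positivity))
      · exact absurd h hij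
      · rw [if_neg (not_lt.2 h.le), zero_add]
        exact hfut i j h
    have hBnn : ∀ i, (0:ℝ) ≤ (if i < j then ε * (1/2)^(j+5) else 0) + ε * (1/2)^(i+5) := by
      intro i
      have : (0:ℝ) ≤ (if i < j then ε * (1/2)^(j+5) else 0) := by
        split <;> positivity
      positivity
    have hsubset : (Finset.range (n+1)).erase j ⊆ Finset.range (n+1) := Finset.erase_subset _ _
    have hstep1 : ∑ i ∈ (Finset.range (n+1)).erase j, |μ (m j) (m i) - c (m i)|
        ≤ ∑ i ∈ Finset.range (n+1), ((if i < j then ε * (1/2)^(j+5) else 0) + ε * (1/2)^(i+5)) :=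
      (Finset.sum_le_sum hterm).trans
        (Finset.sum_le_sum_of_subset_of_nonneg hsubset (fun i _ _ => hBnn i))
    have hsplit : ∑ i ∈ Finset.range (n+1), ((if i < j then ε * (1/2)^(j+5) else 0) + ε * (1/2)^(i+5))
        = (∑ i ∈ Finset.range (n+1), if i < j then ε * (1/2)^(j+5) else 0)
          + ∑ i ∈ Finset.range (n+1), ε * (1/2)^(i+5) := Finset.sum_add_distrib
    have hpart1 : (∑ i ∈ Finset.range (n+1), if i < j then ε * (1/2)^(j+5) else 0) ≤ ε * (1/32) := by
      rw [← Finset.sum_filter]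
      rw [Finset.sum_const, nsmul_eq_mul]
      have hcard : ((Finset.range (n+1)).filter (fun i => i < j)).card ≤ j := by
        have : (Finset.range (n+1)).filter (fun i => i < j) ⊆ Finset.range j := by
          intro i hi
          exact Finset.mem_range.2 (Finset.mem_filter.1 hi).2
        simpa using Finset.card_le_card this
      have hj2 : (j:ℝ) * (1/2)^j ≤ 1 := by
        rw [one_div, inv_pow, mul_inv_le_iff₀ (by positivity), one_mul]
        exact_mod_cast (Nat.lt_two_pow_self (n := j)).le
      calc (((Finset.range (n+1)).filter (fun i => i < j)).card : ℝ) * (ε * (1/2)^(j+5))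
          ≤ (j:ℝ) * (ε * (1/2)^(j+5)) := by
            apply mul_le_mul_of_nonneg_right _ (by positivity)
            exact_mod_cast hcard
        _ = ((j:ℝ) * (1/2)^j) * (ε * (1/2)^5) := by ring
        _ ≤ 1 * (ε * (1/2)^5) := mul_le_mul_of_nonneg_right hj2 (by positivity)
        _ = ε * (1/32) := by norm_num
    have hpart2 : ∑ i ∈ Finset.range (n+1), ε * (1/2)^(i+5) ≤ ε * (1/16) := by
      have : ∑ i ∈ Finset.range (n+1), ε * (1/2)^(i+5)
          = (ε * (1/2)^5) * ∑ i ∈ Finset.range (n+1), (1/(2:ℝ))^i := by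
        rw [Finset.mul_sum]
        exact Finset.sum_congr rfl (fun i _ => by ring)
      rw [this]
      calc (ε * (1/2)^5) * ∑ i ∈ Finset.range (n+1), (1/(2:ℝ))^i
          ≤ (ε * (1/2)^5) * 2 := by
            exact mul_le_mul_of_nonneg_left (sum_geometric_two_le _) (by positivity)
        _ = ε * (1/16) := by ring
    calc ∑ i ∈ (Finset.range (n+1)).erase j, |μ (m j) (m i) - c (m i)|
        ≤ _ := hstep1
      _ = _ := hsplit
      _ ≤ ε * (1/32) + ε * (1/16) := add_le_add hpart1 hpart2
      _ = ε * (3/32) := by ring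
  -- summable centers
  have hsummcm : Summable (fun i => c (m i)) :=
    Summable.of_abs (hsummc.comp_injective hmmono.injective)
  set γseq : ℕ → ℝ := fun n => ∑ i ∈ Finset.range (n+1), c (m i) with hγseqdef
  obtain ⟨γ, hγ⟩ : ∃ γ, Tendsto γseq atTop (nhds γ) := by
    refine ⟨∑' i, c (m i), ?_⟩
    have h1 := hsummcm.hasSum.tendsto_sum_nat
    have h2 := h1.comp (tendsto_add_atTop_nat 1)
    exact h2
  -- the partial-sum elements and their weak cluster point
  set z : ℕ → E := fun n => ∑ i ∈ Finset.range (n+1), v (m i) with hzdef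
  have hzmem : ∀ n, z n ∈ Metric.closedBall (0:E) 1 := by
    intro n
    rw [Metric.mem_closedBall, dist_zero_right]
    have himg : z n = ∑ j ∈ (Finset.range (n+1)).image m, (1:ℝ) • v j := by
      rw [Finset.sum_image (fun a _ b _ h => hmmono.injective h)]
      simp [hzdef]
    rw [himg]
    exact hkey _ (fun _ => 1) (fun _ => Or.inl rfl)
  set a : ℕ → X := fun n => T (z n) with hadef
  have hmemC : ∀ n, toWeakSpace ℝ X (a n) ∈
      closure (toWeakSpace ℝ X '' (T '' Metric.closedBall (0:E) 1)) :=
    fun n => subset_closure ⟨T (z n), ⟨z n, hzmem n, rfl⟩, rfl⟩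
  obtain ⟨aW, haWmem, haW⟩ := hT.exists_mapClusterPt (f := atTop)
    (u := fun n => toWeakSpace ℝ X (a n))
    (Filter.le_principal_iff.2 (Filter.mem_map.2 (Filter.univ_mem' hmemC)))
  obtain ⟨aX, rfl⟩ : ∃ b : X, (toWeakSpace ℝ X) b = aW :=
    ⟨(toWeakSpace ℝ X).symm aW, (toWeakSpace ℝ X).apply_symm_apply aW⟩
  have hevalW : ∀ (g : X →L[ℝ] ℝ), MapClusterPt (g aX) atTop (fun n => g (a n)) := by
    intro g
    have hcont : Continuous (fun w : WeakSpace ℝ X => g ((toWeakSpace ℝ X).symm w)) :=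
      WeakBilin.eval_continuous ((topDualPairing ℝ X).flip) g
    have h0 := MapClusterPt.continuousAt_comp hcont.continuousAt haW
    have he1 : g ((toWeakSpace ℝ X).symm ((toWeakSpace ℝ X) aX)) = g aX := by
      rw [LinearEquiv.symm_apply_apply]
    have he2 : ((fun w : WeakSpace ℝ X => g ((toWeakSpace ℝ X).symm w)) ∘
        (fun n => toWeakSpace ℝ X (a n))) = fun n => g (a n) := by
      funext n
      simp only [Function.comp_apply, LinearEquiv.symm_apply_apply]
    rw [he1, he2] at h0
    exact h0
  -- dual cluster point
  set G : ℕ → WeakDual ℝ X := fun j => StrongDual.toWeakDual (f (m j)) with hGdef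
  have hGmem : ∀ j, G j ∈ WeakDual.toStrongDual ⁻¹' Metric.closedBall 0 1 := by
    intro j
    rw [Set.mem_preimage, Metric.mem_closedBall, dist_zero_right]
    have : ‖WeakDual.toStrongDual (G j)‖ = ‖f (m j)‖ := rfl
    rw [this, hf1]
  obtain ⟨g, hgmem, hgcl⟩ :=
    (WeakDual.isCompact_closedBall (𝕜 := ℝ) (E := X) 0 1).exists_mapClusterPt (f := atTop) (u := G)
      (Filter.le_principal_iff.2 (Filter.mem_map.2 (Filter.univ_mem' hGmem)))
  have hGapp : ∀ j (y : X), G j y = f (m j) y := fun j y => rfl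
  -- evaluation of f (m j) on a n
  have hfeval : ∀ j n, f (m j) (a n) = ∑ i ∈ Finset.range (n+1), μ (m j) (m i) := by
    intro j n
    rw [hadef]
    simp only [hzdef, map_sum]
    rfl
  have hIneq1 : ∀ j n, j ≤ n → γseq n + ε * (13/32) ≤ f (m j) (a n) := by
    intro j n hjn
    rw [hfeval]
    have hjmem : j ∈ Finset.range (n+1) := Finset.mem_range.2 (Nat.lt_succ_of_le hjn)
    have hsplit : ∑ i ∈ Finset.range (n+1), (μ (m j) (m i) - c (m i))
        = (μ (m j) (m j) - c (m j))
          + ∑ i ∈ (Finset.range (n+1)).erase j, (μ (m j) (m i) - c (m i)) :=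
      (Finset.add_sum_erase _ _ hjmem).symm
    have hrest : |∑ i ∈ (Finset.range (n+1)).erase j, (μ (m j) (m i) - c (m i))| ≤ ε * (3/32) :=
      (Finset.abs_sum_le_sum_abs _ _).trans (hoff j n)
    have hdiagj : ε/2 ≤ μ (m j) (m j) - c (m j) := by
      have h1 := hdiag (m j)
      have h2 := hk₀ (m j) (hmk₀ j)
      have h3 := abs_le.1 h2
      linarith [h3.1, h3.2]
    have hsum_eq : ∑ i ∈ Finset.range (n+1), μ (m j) (m i)
        = γseq n + ∑ i ∈ Finset.range (n+1), (μ (m j) (m i) - c (m i)) := by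
      rw [hγseqdef, Finset.sum_sub_distrib]
      ring
    rw [hsum_eq, hsplit]
    have := abs_le.1 hrest
    linarith [this.1]
  have hIneq2 : ∀ j n, n < j → |f (m j) (a n) - γseq n| ≤ ε * (3/32) := by
    intro j n hnj
    rw [hfeval]
    have hsum_eq : ∑ i ∈ Finset.range (n+1), μ (m j) (m i) - γseq n
        = ∑ i ∈ Finset.range (n+1), (μ (m j) (m i) - c (m i)) := by
      rw [hγseqdef, Finset.sum_sub_distrib]
    rw [hsum_eq]
    have hnotmem : j ∉ Finset.range (n+1) := by
      simp only [Finset.mem_range]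
      omega
    have herase : (Finset.range (n+1)).erase j = Finset.range (n+1) :=
      Finset.erase_eq_of_notMem hnotmem
    calc |∑ i ∈ Finset.range (n+1), (μ (m j) (m i) - c (m i))|
        ≤ ∑ i ∈ Finset.range (n+1), |μ (m j) (m i) - c (m i)| :=
          Finset.abs_sum_le_sum_abs _ _
      _ = ∑ i ∈ (Finset.range (n+1)).erase j, |μ (m j) (m i) - c (m i)| := by rw [herase]
      _ ≤ ε * (3/32) := hoff j n
  -- cluster point chain
  have h1 : ∀ j, γ + ε * (13/32) ≤ f (m j) aX :=
    fun j => clusterPt_ge (hevalW (f (m j))) hγ (N0 := j) (fun n hn => hIneq1 j n hn)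
  set gX : X →L[ℝ] ℝ := WeakDual.toStrongDual g with hgXdef
  have h2 : γ + ε * (13/32) ≤ gX aX := by
    have hcont : Continuous (fun w : WeakDual ℝ X => w aX) := WeakDual.eval_continuous aX
    have hcl : MapClusterPt (g aX) atTop (fun j => f (m j) aX) := by
      have h0 := MapClusterPt.continuousAt_comp hcont.continuousAt hgcl
      have he : ((fun w : WeakDual ℝ X => w aX) ∘ G) = fun j => f (m j) aX := by
        funext j
        exact hGapp j aX
      rwa [he] at h0
    have := clusterPt_ge (s := fun j => f (m j) aX) (w := fun _ => γ + ε * (13/32)) (d := 0)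
      hcl tendsto_const_nhds (N0 := 0) (fun j _ => by
        have := h1 j
        simpa using this)
    have h' : γ + ε * (13/32) ≤ g aX := by simpa using this
    exact h'
  have h3 : ∀ n, |gX (a n) - γseq n| ≤ ε * (3/32) := by
    intro n
    have hcont : Continuous (fun w : WeakDual ℝ X => w (a n)) := WeakDual.eval_continuous (a n)
    have hcl : MapClusterPt (g (a n)) atTop (fun j => f (m j) (a n)) := by
      have h0 := MapClusterPt.continuousAt_comp hcont.continuousAt hgcl
      have he : ((fun w : WeakDual ℝ X => w (a n)) ∘ G) = fun j => f (m j) (a n) := by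
        funext j
        exact hGapp j (a n)
      rwa [he] at h0
    exact clusterPt_abs_le (s := fun j => f (m j) (a n)) (w := fun _ => γseq n)
      hcl tendsto_const_nhds (N0 := n+1) (fun j hj => hIneq2 j n hj)
  have h4 : |gX aX - γ| ≤ ε * (3/32) :=
    clusterPt_abs_le (hevalW gX) hγ (N0 := 0) (fun n _ => h3 n)
  have h5 := abs_le.1 h4
  linarith [h2, h5.2]
end

section
/- Let E be a normed vector lattice and F a Banach lattice (or Banach space). The set of KB-operators from E to F is a norm-closed subspace of the space B(E,F) of bounded linear operators: if T_n are KB-operators with ‖T_n − T‖ → 0, then T is a KB-operator. -/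
open Filter Topology Metric

/-- The KB-operators from a normed vector lattice `E` into a Banach lattice `F` form a
norm-closed subspace of `B(E,F)`: an operator-norm limit of KB-operators is a KB-operator. -/
theorem KB_normClosed
    {E F : Type*} [NormedAddCommGroup E] [Lattice E] [IsOrderedAddMonoid E] [HasSolidNorm E] [NormedSpace ℝ E]
    [NormedAddCommGroup F] [Lattice F] [IsOrderedAddMonoid F] [HasSolidNorm F] [NormedSpace ℝ F] [CompleteSpace F]
    (T : ℕ → E →L[ℝ] F) (S : E →L[ℝ] F)
    (hKB : ∀ n, ∀ x : ℕ → E, (∀ m, 0 ≤ x m) → Monotone x → (∀ m, ‖x m‖ ≤ 1) →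
      ∃ φ : ℕ → ℕ, StrictMono φ ∧ ∃ y : F,
        Tendsto (fun m => (T n) (x (φ m))) atTop (nhds y))
    (hlim : Tendsto (fun n => ‖T n - S‖) atTop (nhds 0)) :
    ∀ x : ℕ → E, (∀ m, 0 ≤ x m) → Monotone x → (∀ m, ‖x m‖ ≤ 1) →
      ∃ φ : ℕ → ℕ, StrictMono φ ∧ ∃ y : F,
        Tendsto (fun m => S (x (φ m))) atTop (nhds y) := by
  intro x hpos hmono hnorm
  have hn : ∀ k : ℕ, ∃ nk, ‖T nk - S‖ ≤ ((k : ℝ) + 1)⁻¹ := by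
    intro k
    have h : ∀ᶠ m in atTop, ‖T m - S‖ < ((k : ℝ) + 1)⁻¹ :=
      hlim.eventually (gt_mem_nhds (by positivity))
    obtain ⟨m, hm⟩ := h.exists
    exact ⟨m, hm.le⟩
  choose n hn using hn
  have key : ∀ (k : ℕ) (ψ : ℕ → ℕ), StrictMono ψ → ∃ φ : ℕ → ℕ, StrictMono φ ∧ ∃ y : F,
      Tendsto (fun m => (T (n k)) (x (ψ (φ m)))) atTop (nhds y) := fun k ψ hψ =>
    hKB (n k) (fun m => x (ψ m)) (fun m => hpos _) (fun a b hab => hmono (hψ.monotone hab))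
      (fun m => hnorm _)
  choose! φ hφ y hy using key
  set Ψ : ℕ → ℕ → ℕ := fun k => Nat.rec id (fun j ψ => ψ ∘ φ j ψ) k with hΨdef
  have hΨsucc : ∀ k, Ψ (k + 1) = Ψ k ∘ φ k (Ψ k) := fun k => rfl
  have hΨmono : ∀ k, StrictMono (Ψ k) := by
    intro k; induction k with
    | zero => exact strictMono_id
    | succ k ih => rw [hΨsucc]; exact ih.comp (hφ k (Ψ k) ih)
  have hdec : ∀ K j, K ≤ j → ∃ θ : ℕ → ℕ, StrictMono θ ∧ ∀ m, Ψ j m = Ψ K (θ m) := by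
    intro K j h
    induction j, h using Nat.le_induction with
    | base => exact ⟨id, strictMono_id, fun m => rfl⟩
    | succ j hj ih =>
      obtain ⟨θ, hθ, hθeq⟩ := ih
      exact ⟨θ ∘ φ j (Ψ j), hθ.comp (hφ j (Ψ j) (hΨmono j)), fun m => by
        rw [hΨsucc]; exact hθeq _⟩
  set d : ℕ → ℕ := fun k => Ψ k k with hd
  have hdmono : StrictMono d := by
    apply strictMono_nat_of_lt_succ
    intro k
    calc Ψ k k < Ψ k (k + 1) := hΨmono k (Nat.lt_succ_self k)
      _ ≤ Ψ k (φ k (Ψ k) (k + 1)) :=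
          (hΨmono k).monotone ((hφ k (Ψ k) (hΨmono k)).le_apply)
      _ = Ψ (k + 1) (k + 1) := rfl
  refine ⟨d, hdmono, ?_⟩
  have hcauchy : CauchySeq (fun k => S (x (d k))) := by
    rw [Metric.cauchySeq_iff]
    intro ε hε
    obtain ⟨k, hk⟩ : ∃ k : ℕ, ((k : ℝ) + 1)⁻¹ < ε / 4 := by
      obtain ⟨k, hk⟩ := exists_nat_gt (4 / ε)
      refine ⟨k, ?_⟩
      have h1 : (0 : ℝ) < 4 / ε := by positivity
      have h2 : (4 / ε) < (k : ℝ) + 1 := lt_trans hk (by linarith)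
      have := inv_strictAnti₀ h1 h2
      rwa [inv_div] at this
    have hTS : ‖T (n k) - S‖ < ε / 4 := lt_of_le_of_lt (hn k) hk
    have hconv : Tendsto (fun m => (T (n k)) (x (Ψ (k + 1) m))) atTop
        (nhds (y k (Ψ k))) := hy k (Ψ k) (hΨmono k)
    have hc : CauchySeq (fun m => (T (n k)) (x (Ψ (k + 1) m))) := hconv.cauchySeq
    rw [Metric.cauchySeq_iff] at hc
    obtain ⟨N, hN⟩ := hc (ε / 4) (by linarith)
    refine ⟨max (k + 1) N, ?_⟩
    intro p hp q hq
    obtain ⟨θp, hθp, hθpeq⟩ := hdec (k + 1) p (le_trans (le_max_left _ _) hp)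
    obtain ⟨θq, hθq, hθqeq⟩ := hdec (k + 1) q (le_trans (le_max_left _ _) hq)
    have hap : N ≤ θp p := le_trans (le_trans (le_max_right _ _) hp) hθp.le_apply
    have haq : N ≤ θq q := le_trans (le_trans (le_max_right _ _) hq) hθq.le_apply
    have hmid := hN (θp p) hap (θq q) haq
    have hdp : d p = Ψ (k + 1) (θp p) := hθpeq p
    have hdq : d q = Ψ (k + 1) (θq q) := hθqeq q
    have hbound : ∀ z : E, ‖z‖ ≤ 1 → dist (S z) ((T (n k)) z) ≤ ε / 4 := by
      intro z hz
      rw [dist_eq_norm]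
      calc ‖S z - (T (n k)) z‖ = ‖(T (n k) - S) z‖ := by
            rw [← norm_neg]; congr 1; simp
        _ ≤ ‖T (n k) - S‖ * ‖z‖ := (T (n k) - S).le_opNorm z
        _ ≤ ε / 4 * 1 := mul_le_mul hTS.le hz (norm_nonneg _) (by linarith)
        _ = ε / 4 := mul_one _
    have h1 := hbound (x (d p)) (hnorm _)
    have h2 := hbound (x (d q)) (hnorm _)
    have h3 : dist ((T (n k)) (x (d p))) ((T (n k)) (x (d q))) < ε / 4 := by
      rw [hdp, hdq]; exact hmid
    calc dist (S (x (d p))) (S (x (d q)))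
        ≤ dist (S (x (d p))) ((T (n k)) (x (d p)))
          + dist ((T (n k)) (x (d p))) ((T (n k)) (x (d q)))
          + dist ((T (n k)) (x (d q))) (S (x (d q))) := dist_triangle4 _ _ _ _
      _ < ε := by
          rw [dist_comm ((T (n k)) (x (d q)))] at *
          linarith [dist_comm ((T (n k)) (x (d q))) (S (x (d q)))]
  obtain ⟨yy, hyy⟩ := cauchySeq_tendsto_of_complete hcauchy
  exact ⟨yy, hyy⟩
end

section
/- Let E be a normed vector lattice, F a Banach lattice which is a KB-space, and T : E → F an order bounded operator (whose modulus exists). Then T⁺, T⁻, T, and |T| are all KB-operators. -/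
open Filter Topology Metric

private lemma pos_op_conv
    {E F : Type*} [NormedAddCommGroup E] [Lattice E] [HasSolidNorm E] [IsOrderedAddMonoid E] [NormedSpace ℝ E]
    [NormedAddCommGroup F] [Lattice F] [HasSolidNorm F] [IsOrderedAddMonoid F] [NormedSpace ℝ F]
    (hKBspace : ∀ y : ℕ → F, (∀ n, 0 ≤ y n) → Monotone y →
      (∃ C : ℝ, ∀ n, ‖y n‖ ≤ C) → ∃ l : F, Tendsto y atTop (nhds l))
    (P : E →L[ℝ] F) (hP : ∀ x : E, 0 ≤ x → 0 ≤ P x)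
    (x : ℕ → E) (hpos : ∀ n, 0 ≤ x n) (hmono : Monotone x) (hbd : ∀ n, ‖x n‖ ≤ 1) :
    ∃ l : F, Tendsto (fun n => P (x n)) atTop (nhds l) := by
  apply hKBspace
  · intro n; exact hP _ (hpos n)
  · intro n m hnm
    have := hP (x m - x n) (sub_nonneg.2 (hmono hnm))
    simpa [map_sub, sub_nonneg] using this
  · exact ⟨‖P‖, fun n => by
      calc ‖P (x n)‖ ≤ ‖P‖ * ‖x n‖ := P.le_opNorm _
        _ ≤ ‖P‖ * 1 := by
            exact mul_le_mul_of_nonneg_left (hbd n) (norm_nonneg _)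
        _ = ‖P‖ := mul_one _⟩

/-- Let `E` be a normed vector lattice and `F` a KB-space (every increasing norm-bounded
sequence of positive elements of `F` is norm convergent).  If `T : E → F` is order
bounded with modulus, i.e. `T = T⁺ - T⁻` for positive operators `T⁺, T⁻` (and
`|T| = T⁺ + T⁻`), then `T⁺`, `T⁻`, `T` and `|T|` are all KB-operators. -/
theorem orderBounded_into_KBspace_isKB
    {E F : Type*} [NormedAddCommGroup E] [Lattice E] [HasSolidNorm E] [IsOrderedAddMonoid E] [NormedSpace ℝ E]
    [NormedAddCommGroup F] [Lattice F] [HasSolidNorm F] [IsOrderedAddMonoid F] [NormedSpace ℝ F] [CompleteSpace F]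
    (hKBspace : ∀ y : ℕ → F, (∀ n, 0 ≤ y n) → Monotone y →
      (∃ C : ℝ, ∀ n, ‖y n‖ ≤ C) → ∃ l : F, Tendsto y atTop (nhds l))
    (T Tp Tm : E →L[ℝ] F)
    (hTp : ∀ x : E, 0 ≤ x → 0 ≤ Tp x) (hTm : ∀ x : E, 0 ≤ x → 0 ≤ Tm x)
    (hdecomp : ∀ x : E, T x = Tp x - Tm x) :
    ∀ S ∈ ({Tp, Tm, T, Tp + Tm} : Set (E →L[ℝ] F)),
      ∀ x : ℕ → E, (∀ n, 0 ≤ x n) → Monotone x → (∀ n, ‖x n‖ ≤ 1) →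
        ∃ φ : ℕ → ℕ, StrictMono φ ∧ ∃ y : F,
          Tendsto (fun n => S (x (φ n))) atTop (nhds y) := by
  intro S hS x hpos hmono hbd
  obtain ⟨lp, hlp⟩ := pos_op_conv hKBspace Tp hTp x hpos hmono hbd
  obtain ⟨lm, hlm⟩ := pos_op_conv hKBspace Tm hTm x hpos hmono hbd
  refine ⟨id, strictMono_id, ?_⟩
  simp only [Set.mem_insert_iff, Set.mem_singleton_iff] at hS
  rcases hS with rfl | rfl | rfl | rfl
  · exact ⟨lp, hlp⟩
  · exact ⟨lm, hlm⟩
  · refine ⟨lp - lm, ?_⟩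
    simpa [hdecomp] using hlp.sub hlm
  · refine ⟨lp + lm, ?_⟩
    simpa using hlp.add hlm
end

section
/- Let E and F be Banach lattices and T : E → F an order bounded operator whose modulus |T| is a KB-operator. Then T is a KB-operator. -/
open Filter Topology Metric

/-- If the modulus `|T|` of an order bounded operator `T` between Banach lattices is a
KB-operator, then `T` is a KB-operator.  The modulus `M = |T|` is characterized by the
Riesz–Kantorovich formula: `M x = sup {T y : |y| ≤ x}` for every `x ≥ 0`. -/
theorem KB_of_modulus_KB
    {E F : Type*} [NormedAddCommGroup E] [Lattice E] [HasSolidNorm E] [IsOrderedAddMonoid E] [NormedSpace ℝ E] [CompleteSpace E]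
    [NormedAddCommGroup F] [Lattice F] [HasSolidNorm F] [IsOrderedAddMonoid F] [NormedSpace ℝ F] [CompleteSpace F]
    (T M : E →L[ℝ] F)
    (hMod : ∀ x : E, 0 ≤ x → IsLUB {z : F | ∃ y : E, |y| ≤ x ∧ z = T y} (M x))
    (hMKB : ∀ x : ℕ → E, (∀ n, 0 ≤ x n) → Monotone x → (∀ n, ‖x n‖ ≤ 1) →
      ∃ φ : ℕ → ℕ, StrictMono φ ∧ ∃ y : F,
        Tendsto (fun n => M (x (φ n))) atTop (nhds y)) :
    ∀ x : ℕ → E, (∀ n, 0 ≤ x n) → Monotone x → (∀ n, ‖x n‖ ≤ 1) →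
      ∃ φ : ℕ → ℕ, StrictMono φ ∧ ∃ y : F,
        Tendsto (fun n => T (x (φ n))) atTop (nhds y) := by
  -- key domination: for y ≥ 0, |T y| ≤ M y, hence ‖T y‖ ≤ ‖M y‖
  have key : ∀ y : E, 0 ≤ y → ‖T y‖ ≤ ‖M y‖ := by
    intro y hy
    have hlub := hMod y hy
    have h1 : T y ≤ M y := hlub.1 ⟨y, by rw [abs_of_nonneg hy], rfl⟩
    have h2 : -(T y) ≤ M y := by
      have : T (-y) ≤ M y := hlub.1 ⟨-y, by rw [abs_neg, abs_of_nonneg hy], rfl⟩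
      simpa using this
    have habs : |T y| ≤ M y := abs_le'.2 ⟨h1, h2⟩
    have hMy : 0 ≤ M y := le_trans (abs_nonneg _) habs
    exact HasSolidNorm.solid (by rwa [abs_of_nonneg hMy])
  intro x hpos hmono hbd
  obtain ⟨φ, hφ, y, hy⟩ := hMKB x hpos hmono hbd
  refine ⟨φ, hφ, ?_⟩
  have hdist : ∀ m n : ℕ, dist (T (x (φ m))) (T (x (φ n))) ≤ dist (M (x (φ m))) (M (x (φ n))) := by
    have base : ∀ m n : ℕ, m ≤ n →
        dist (T (x (φ m))) (T (x (φ n))) ≤ dist (M (x (φ m))) (M (x (φ n))) := by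
      intro m n hmn
      have hle : x (φ m) ≤ x (φ n) := hmono (hφ.monotone hmn)
      have h := key (x (φ n) - x (φ m)) (sub_nonneg.2 hle)
      rw [map_sub, map_sub] at h
      rw [dist_eq_norm, dist_eq_norm, norm_sub_rev, norm_sub_rev (M _)]
      exact h
    intro m n
    rcases le_total m n with h | h
    · exact base m n h
    · rw [dist_comm, dist_comm (M _)]; exact base n m h
  have hcauchyM : CauchySeq (fun n => M (x (φ n))) := hy.cauchySeq
  have hcauchyT : CauchySeq (fun n => T (x (φ n))) := by
    rw [Metric.cauchySeq_iff] at hcauchyM ⊢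
    intro ε hε
    obtain ⟨N, hN⟩ := hcauchyM ε hε
    exact ⟨N, fun m hm n hn => lt_of_le_of_lt (hdist m n) (hN m hm n hn)⟩
  exact cauchySeq_tendsto_of_complete hcauchyT
end

section
/- Let S, T : E → F be positive operators between Banach lattices with 0 ≤ S ≤ T. If T is a KB-operator, then S is a KB-operator. -/
open Filter Topology Metric

/-- Domination property: if `0 ≤ S ≤ T` are positive operators between Banach lattices
and `T` is a KB-operator, then `S` is a KB-operator. -/
theorem KB_of_dominated
    {E F : Type*} [NormedAddCommGroup E] [Lattice E] [HasSolidNorm E] [IsOrderedAddMonoid E] [NormedSpace ℝ E] [CompleteSpace E]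
    [NormedAddCommGroup F] [Lattice F] [HasSolidNorm F] [IsOrderedAddMonoid F] [NormedSpace ℝ F] [CompleteSpace F]
    (S T : E →L[ℝ] F)
    (hS : ∀ x : E, 0 ≤ x → 0 ≤ S x)
    (hST : ∀ x : E, 0 ≤ x → S x ≤ T x)
    (hT : ∀ x : ℕ → E, (∀ n, 0 ≤ x n) → Monotone x → (∀ n, ‖x n‖ ≤ 1) →
      ∃ φ : ℕ → ℕ, StrictMono φ ∧ ∃ y : F,
        Tendsto (fun n => T (x (φ n))) atTop (nhds y)) :
    ∀ x : ℕ → E, (∀ n, 0 ≤ x n) → Monotone x → (∀ n, ‖x n‖ ≤ 1) →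
      ∃ φ : ℕ → ℕ, StrictMono φ ∧ ∃ y : F,
        Tendsto (fun n => S (x (φ n))) atTop (nhds y) := by
  intro x hpos hmono hbd
  obtain ⟨φ, hφ, y, hy⟩ := hT x hpos hmono hbd
  refine ⟨φ, hφ, ?_⟩
  have key : ∀ m n, n ≤ m → ‖S (x (φ m)) - S (x (φ n))‖ ≤ ‖T (x (φ m)) - T (x (φ n))‖ := by
    intro m n hnm
    have hd : (0:E) ≤ x (φ m) - x (φ n) := sub_nonneg.2 (hmono (hφ.monotone hnm))
    have h1 : (0:F) ≤ S (x (φ m)) - S (x (φ n)) := by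
      have := hS _ hd; rwa [map_sub] at this
    have h2 : S (x (φ m)) - S (x (φ n)) ≤ T (x (φ m)) - T (x (φ n)) := by
      have := hST _ hd; rwa [map_sub, map_sub] at this
    have h3 : (0:F) ≤ T (x (φ m)) - T (x (φ n)) := le_trans h1 h2
    apply HasSolidNorm.solid
    rwa [abs_of_nonneg h1, abs_of_nonneg h3]
  have hc : CauchySeq (fun n => S (x (φ n))) := by
    rw [Metric.cauchySeq_iff]
    intro ε hε
    obtain ⟨N, hN⟩ := Metric.cauchySeq_iff.1 hy.cauchySeq ε hε
    refine ⟨N, fun m hm n hn => ?_⟩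
    rcases le_total n m with h | h
    · calc dist (S (x (φ m))) (S (x (φ n))) = ‖S (x (φ m)) - S (x (φ n))‖ := dist_eq_norm _ _
        _ ≤ ‖T (x (φ m)) - T (x (φ n))‖ := key m n h
        _ = dist (T (x (φ m))) (T (x (φ n))) := (dist_eq_norm _ _).symm
        _ < ε := hN m hm n hn
    · calc dist (S (x (φ m))) (S (x (φ n))) = ‖S (x (φ n)) - S (x (φ m))‖ := by
            rw [dist_eq_norm, norm_sub_rev]
        _ ≤ ‖T (x (φ n)) - T (x (φ m))‖ := key n m h
        _ = dist (T (x (φ m))) (T (x (φ n))) := by rw [← dist_eq_norm, dist_comm]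
        _ < ε := hN m hm n hn
  exact cauchySeq_tendsto_of_complete hc
end

section
/- Let E and F be Banach lattices where E has order continuous norm, let G be an order dense sublattice of E, and let T : E → F be a positive operator. If the restriction of T to G is a KB-operator (equivalently b-weakly compact on G), then T is a KB-operator on E. -/
open Filter Topology Metric

/-- If `G` is order dense and `z` bounds every element of `G ∩ [0, x]` from above
(with `z ≥ 0`), then `x ≤ z`. -/
private lemma KB_sup_aux {E : Type*} [NormedAddCommGroup E] [Lattice E] [HasSolidNorm E] [IsOrderedAddMonoid E] [NormedSpace ℝ E]
    (G : Set E) (hGsmul : ∀ (c : ℝ), ∀ a ∈ G, c • a ∈ G)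
    (hGdense : ∀ x : E, 0 < x → ∃ y ∈ G, 0 < y ∧ y ≤ x)
    (x z : E) (hx : 0 ≤ x)
    (hz : ∀ g ∈ G, 0 ≤ g → g ≤ x → g ≤ z) (hz0 : 0 ≤ z) :
    x ≤ z := by
  by_contra hcon
  have hw : 0 < x - x ⊓ z :=
    sub_pos.mpr (lt_of_le_of_ne inf_le_left (fun h => hcon (inf_eq_left.mp h)))
  obtain ⟨g0, hg0G, hg0pos, hg0le⟩ := hGdense _ hw
  have hxz0 : 0 ≤ x ⊓ z := le_inf hx hz0
  have hg0x : g0 ≤ x := hg0le.trans ((sub_le_self x hxz0))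
  have key : ∀ n : ℕ, (n + 1) • g0 ≤ x := by
    intro n
    induction n with
    | zero => simpa using hg0x
    | succ n ih =>
      have hmem : ((n + 1) • g0) ∈ G := by
        have := hGsmul ((n + 1 : ℕ) : ℝ) g0 hg0G
        rwa [Nat.cast_smul_eq_nsmul] at this
      have hnn : 0 ≤ (n + 1) • g0 := nsmul_nonneg hg0pos.le _
      have hle_z := hz _ hmem hnn ih
      have h1 : x ⊓ z ≤ x - g0 := le_sub_comm.mp hg0le
      have h2 : (n + 1) • g0 ≤ x - g0 := (le_inf ih hle_z).trans h1
      have : (n + 1) • g0 + g0 ≤ x := by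
        calc (n + 1) • g0 + g0 ≤ (x - g0) + g0 := add_le_add_left h2 g0
        _ = x := by abel
      simpa [succ_nsmul] using this
  have hnorm : ∀ n : ℕ, ((n : ℝ) + 1) * ‖g0‖ ≤ ‖x‖ := by
    intro n
    have h1 : 0 ≤ (n + 1) • g0 := nsmul_nonneg hg0pos.le _
    have h2 : ‖(n + 1) • g0‖ ≤ ‖x‖ :=
      norm_le_norm_of_abs_le_abs (by rw [abs_of_nonneg h1, abs_of_nonneg hx]; exact key n)
    have h3 : ((n : ℝ) + 1) • g0 = (n + 1) • g0 := by
      have := Nat.cast_smul_eq_nsmul (R := ℝ) (n + 1) g0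
      push_cast at this; exact this
    rw [← h3, norm_smul] at h2
    rwa [Real.norm_eq_abs, abs_of_nonneg (by positivity : (0:ℝ) ≤ (n : ℝ) + 1)] at h2
  have hg0ne : ‖g0‖ > 0 := norm_pos_iff.mpr hg0pos.ne'
  obtain ⟨n, hn⟩ := exists_nat_gt (‖x‖ / ‖g0‖)
  have h4 : ‖x‖ < (n : ℝ) * ‖g0‖ := (div_lt_iff₀ hg0ne).mp hn
  have h5 : (n : ℝ) * ‖g0‖ ≤ ((n : ℝ) + 1) * ‖g0‖ :=
    mul_le_mul_of_nonneg_right (le_add_of_nonneg_right zero_le_one) hg0ne.le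
  exact absurd (hnorm n) (not_le.mpr (h4.trans_le h5))

/-- Order density + order continuity of the norm: approximation in norm from below by
elements of `G`. -/
private lemma KB_approx_aux {E : Type*} [NormedAddCommGroup E] [Lattice E] [HasSolidNorm E] [IsOrderedAddMonoid E] [NormedSpace ℝ E]
    (hoc : ∀ A : Set E, A.Nonempty → DirectedOn (· ≥ ·) A → IsGLB A 0 →
      ∀ ε > (0 : ℝ), ∃ a ∈ A, ‖a‖ < ε)
    (G : Set E)
    (hGlat : ∀ a ∈ G, ∀ b ∈ G, a ⊔ b ∈ G ∧ a ⊓ b ∈ G)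
    (hGsmul : ∀ (c : ℝ), ∀ a ∈ G, c • a ∈ G)
    (hGdense : ∀ x : E, 0 < x → ∃ y ∈ G, 0 < y ∧ y ≤ x)
    (hG0 : (0 : E) ∈ G) (x : E) (hx : 0 ≤ x) (ε : ℝ) (hε : 0 < ε) :
    ∃ g ∈ G, 0 ≤ g ∧ g ≤ x ∧ ‖x - g‖ < ε := by
  set A : Set E := {a : E | ∃ g ∈ G, 0 ≤ g ∧ g ≤ x ∧ a = x - g} with hA
  have hne : A.Nonempty := ⟨x, 0, hG0, le_rfl, hx, by simp⟩
  have hdir : DirectedOn (· ≥ ·) A := by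
    rintro a ⟨g1, hg1G, hg1nn, hg1le, rfl⟩ b ⟨g2, hg2G, hg2nn, hg2le, rfl⟩
    refine ⟨x - g1 ⊔ g2, ⟨g1 ⊔ g2, (hGlat _ hg1G _ hg2G).1, hg1nn.trans le_sup_left,
      sup_le hg1le hg2le, rfl⟩, ?_, ?_⟩
    · exact sub_le_sub_left le_sup_left x
    · exact sub_le_sub_left le_sup_right x
  have hglb : IsGLB A 0 := by
    constructor
    · rintro a ⟨g, hgG, hgnn, hgle, rfl⟩
      exact sub_nonneg.mpr hgle
    · intro b hb
      have hbx : b ≤ x := by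
        exact hb ⟨0, hG0, le_rfl, hx, (sub_zero x).symm⟩
      have hxb : x ≤ x - b := by
        refine KB_sup_aux G hGsmul hGdense x (x - b) hx ?_ (sub_nonneg.mpr hbx)
        intro g hgG hgnn hgle
        exact le_sub_comm.mp (hb ⟨g, hgG, hgnn, hgle, rfl⟩)
      exact (add_le_iff_nonpos_right x).mp (le_sub_iff_add_le.mp hxb)
  obtain ⟨a, ⟨g, hgG, hgnn, hgle, rfl⟩, hnorm⟩ := hoc A hne hdir hglb ε hε
  exact ⟨g, hgG, hgnn, hgle, hnorm⟩

/-- Let `E`, `F` be Banach lattices with `E` having order continuous norm, `G` an order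
dense sublattice of `E`, and `T : E → F` a positive operator.  If the restriction of `T`
to `G` is a KB-operator, then `T` is a KB-operator on `E`.  (For a positive operator,
being a KB-operator is expressed by norm convergence of the images of positive increasing
norm-bounded sequences.) -/
theorem KB_of_KB_on_orderDense
    {E F : Type*} [NormedAddCommGroup E] [Lattice E] [HasSolidNorm E] [IsOrderedAddMonoid E] [NormedSpace ℝ E] [CompleteSpace E]
    [NormedAddCommGroup F] [Lattice F] [HasSolidNorm F] [IsOrderedAddMonoid F] [NormedSpace ℝ F] [CompleteSpace F]
    -- `E` has order continuous norm:
    (hoc : ∀ A : Set E, A.Nonempty → DirectedOn (· ≥ ·) A → IsGLB A 0 →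
      ∀ ε > (0 : ℝ), ∃ a ∈ A, ‖a‖ < ε)
    -- `G` is a sublattice (and subspace) of `E`:
    (G : Set E)
    (hGlat : ∀ a ∈ G, ∀ b ∈ G, a ⊔ b ∈ G ∧ a ⊓ b ∈ G)
    (hGadd : ∀ a ∈ G, ∀ b ∈ G, a + b ∈ G) (hGsmul : ∀ (c : ℝ), ∀ a ∈ G, c • a ∈ G)
    -- `G` is order dense in `E`:
    (hGdense : ∀ x : E, 0 < x → ∃ y ∈ G, 0 < y ∧ y ≤ x)
    (T : E →L[ℝ] F) (hpos : ∀ x : E, 0 ≤ x → 0 ≤ T x)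
    -- the restriction of `T` to `G` is a KB-operator:
    (hTG : ∀ x : ℕ → E, (∀ n, x n ∈ G) → (∀ n, 0 ≤ x n) → Monotone x →
      (∀ n, ‖x n‖ ≤ 1) → ∃ y : F, Tendsto (fun n => T (x n)) atTop (nhds y)) :
    ∀ x : ℕ → E, (∀ n, 0 ≤ x n) → Monotone x → (∀ n, ‖x n‖ ≤ 1) →
      ∃ y : F, Tendsto (fun n => T (x n)) atTop (nhds y) := by
  intro x hxnn hxmono hxbd
  by_cases hall : ∀ n, x n = 0
  · refine ⟨0, ?_⟩
    have : (fun n => T (x n)) = fun _ => (0 : F) := by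
      funext n; rw [hall n, map_zero]
    rw [this]
    exact tendsto_const_nhds
  · push_neg at hall
    obtain ⟨N, hN⟩ := hall
    have hxN : 0 < x N := (hxnn N).lt_of_ne (Ne.symm hN)
    obtain ⟨g0, hg0G, -, -⟩ := hGdense _ hxN
    have hG0 : (0 : E) ∈ G := by simpa using hGsmul 0 g0 hg0G
    -- choose approximants
    have hchoice : ∀ n : ℕ, ∃ g ∈ G, 0 ≤ g ∧ g ≤ x n ∧
        ‖x n - g‖ < (1 / (‖T‖ + 1)) * (1 / 2) ^ n := by
      intro n
      refine KB_approx_aux hoc G hGlat hGsmul hGdense hG0 (x n) (hxnn n) _ ?_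
      have h1 : (0:ℝ) < ‖T‖ + 1 := by positivity
      positivity
    choose g hgG hgnn hgle hgnorm using hchoice
    -- running suprema
    set h : ℕ → E := fun n => Nat.rec (g 0) (fun k hk => hk ⊔ g (k + 1)) n with hh
    have hsucc : ∀ n, h (n + 1) = h n ⊔ g (n + 1) := fun n => rfl
    have hGmem : ∀ n, h n ∈ G := by
      intro n
      induction n with
      | zero => exact hgG 0
      | succ n ih => rw [hsucc]; exact (hGlat _ ih _ (hgG (n + 1))).1
    have hgh : ∀ n, g n ≤ h n := by
      intro n
      cases n with
      | zero => exact le_rfl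
      | succ n => rw [hsucc]; exact le_sup_right
    have hnn : ∀ n, 0 ≤ h n := fun n => (hgnn n).trans (hgh n)
    have hmonoh : Monotone h := monotone_nat_of_le_succ fun n => by
      rw [hsucc]; exact le_sup_left
    have hhx : ∀ n, h n ≤ x n := by
      intro n
      induction n with
      | zero => exact hgle 0
      | succ n ih =>
        rw [hsucc]
        exact sup_le (ih.trans (hxmono (Nat.le_succ n))) (hgle (n + 1))
    have hbdh : ∀ n, ‖h n‖ ≤ 1 := by
      intro n
      refine le_trans ?_ (hxbd n)
      exact norm_le_norm_of_abs_le_abs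
        (by rw [abs_of_nonneg (hnn n), abs_of_nonneg (hxnn n)]; exact hhx n)
    obtain ⟨y, hy⟩ := hTG h hGmem hnn hmonoh hbdh
    refine ⟨y, ?_⟩
    have hdiff : Tendsto (fun n => T (x n) - T (h n)) atTop (nhds 0) := by
      apply squeeze_zero_norm (a := fun n => (1 / 2 : ℝ) ^ n)
      · intro n
        have e1 : T (x n) - T (h n) = T (x n - h n) := by rw [map_sub]
        have hle1 : 0 ≤ T (x n - h n) := hpos _ (sub_nonneg.mpr (hhx n))
        have hle2 : T (x n - h n) ≤ T (x n - g n) := by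
          have : x n - h n ≤ x n - g n := sub_le_sub_left (hgh n) _
          have h0 : 0 ≤ T (x n - g n - (x n - h n)) := hpos _ (sub_nonneg.mpr this)
          rw [map_sub] at h0
          exact sub_nonneg.mp h0
        have hn1 : ‖T (x n - h n)‖ ≤ ‖T (x n - g n)‖ :=
          norm_le_norm_of_abs_le_abs (by
            rw [abs_of_nonneg hle1, abs_of_nonneg (hle1.trans hle2)]; exact hle2)
        have hn2 : ‖T (x n - g n)‖ ≤ ‖T‖ * ‖x n - g n‖ := T.le_opNorm _
        have hn3 : ‖T‖ * ‖x n - g n‖ ≤ ‖T‖ * ((1 / (‖T‖ + 1)) * (1 / 2) ^ n) :=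
          mul_le_mul_of_nonneg_left (hgnorm n).le (norm_nonneg T)
        have hn4 : ‖T‖ * ((1 / (‖T‖ + 1)) * (1 / 2) ^ n) ≤ (1 / 2 : ℝ) ^ n := by
          have hT0 : (0:ℝ) ≤ ‖T‖ := norm_nonneg T
          have hT1 : (0:ℝ) < ‖T‖ + 1 := by positivity
          have hp : (0:ℝ) ≤ (1 / 2 : ℝ) ^ n := by positivity
          rw [← mul_assoc]
          refine mul_le_of_le_one_left hp ?_
          rw [mul_one_div, div_le_one hT1]
          linarith
        rw [e1]
        exact hn1.trans (hn2.trans (hn3.trans hn4))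
      · exact tendsto_pow_atTop_nhds_zero_of_lt_one (by norm_num) (by norm_num)
    have := hy.add hdiff
    simpa using this
end

section
/- Let E be a Banach lattice with a strong order unit e and order continuous norm, and let F be a Dedekind complete Banach lattice. Then every bounded linear operator T : E → F is a KB-operator. -/
open Filter Topology Metric

section Aux

variable {E : Type*} [NormedAddCommGroup E] [Lattice E] [HasSolidNorm E] [IsOrderedAddMonoid E] [NormedSpace ℝ E]

/-- Riesz inequality: `a ⊓ (b + c) ≤ a ⊓ b + a ⊓ c` for nonnegative elements. -/
lemma riesz_inf_add {a b c : E} (ha : 0 ≤ a) (hb : 0 ≤ b) (hc : 0 ≤ c) :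
    a ⊓ (b + c) ≤ a ⊓ b + a ⊓ c := by
  have key : a ⊓ (b + c) - a ⊓ c ≤ a ⊓ b := by
    rw [sub_eq_add_neg, neg_inf, add_sup]
    refine sup_le (le_inf ?_ ?_) (le_inf ?_ ?_)
    · have h1 : a ⊓ (b + c) ≤ a := inf_le_left
      have : a ⊓ (b + c) + -a ≤ 0 := by simpa [add_neg_le_iff_le_add] using h1
      exact this.trans ha
    · have h1 : a ⊓ (b + c) ≤ a := inf_le_left
      have : a ⊓ (b + c) + -a ≤ 0 := by simpa [add_neg_le_iff_le_add] using h1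
      exact this.trans hb
    · have h1 : a ⊓ (b + c) ≤ a := inf_le_left
      calc a ⊓ (b + c) + -c ≤ a + -c := add_le_add_left h1 _
        _ ≤ a := by simpa using hc
    · have h1 : a ⊓ (b + c) ≤ b + c := inf_le_right
      calc a ⊓ (b + c) + -c ≤ (b + c) + -c := add_le_add_left h1 _
        _ = b := by abel
  exact sub_le_iff_le_add.mp key

lemma inf_nsmul_le {a b : E} (ha : 0 ≤ a) (hb : 0 ≤ b) :
    ∀ n : ℕ, a ⊓ (n • b) ≤ n • (a ⊓ b) := by
  intro n
  induction n with
  | zero => simpa using inf_le_right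
  | succ n ih =>
      have h1 : a ⊓ ((n + 1) • b) = a ⊓ (n • b + b) := by rw [succ_nsmul]
      have h2 : a ⊓ (n • b + b) ≤ a ⊓ (n • b) + a ⊓ b :=
        riesz_inf_add ha (nsmul_nonneg hb n) hb
      have h3 : a ⊓ (n • b) + a ⊓ b ≤ n • (a ⊓ b) + a ⊓ b := add_le_add_left ih _
      rw [h1, succ_nsmul]
      exact h2.trans h3

lemma nonneg_of_nsmul_nonneg {y : E} {n : ℕ} (hn : 0 < n) (h : 0 ≤ n • y) : 0 ≤ y := by
  have hdec : n • y = n • y⁺ - n • y⁻ := by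
    rw [← nsmul_sub, posPart_sub_negPart]
  have h1 : n • y⁻ ≤ n • y⁺ := by
    rw [hdec] at h
    exact sub_nonneg.mp h
  have h2 : y⁻ ≤ n • y⁻ := by
    obtain ⟨m, rfl⟩ := Nat.exists_eq_succ_of_ne_zero hn.ne'
    rw [succ_nsmul]
    exact le_add_of_nonneg_left (nsmul_nonneg (negPart_nonneg y) m)
  have h3 : y⁻ ≤ n • y⁺ := h2.trans h1
  have h4 : y⁻ = y⁻ ⊓ (n • y⁺) := (inf_eq_left.mpr h3).symm
  have h5 : y⁻ ⊓ (n • y⁺) ≤ n • (y⁻ ⊓ y⁺) :=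
    inf_nsmul_le (negPart_nonneg y) (posPart_nonneg y) n
  have h6 : y⁻ ⊓ y⁺ = 0 := by rw [inf_comm]; exact posPart_inf_negPart_eq_zero y
  have h7 : y⁻ ≤ 0 := by
    calc y⁻ = y⁻ ⊓ (n • y⁺) := h4
      _ ≤ n • (y⁻ ⊓ y⁺) := h5
      _ = 0 := by rw [h6, smul_zero]
  have h8 : y⁻ = 0 := le_antisymm h7 (negPart_nonneg y)
  exact negPart_eq_zero.mp h8

/-- Nonnegative real scalar multiples of nonnegative elements are nonnegative. -/
lemma real_smul_nonneg {c : ℝ} (hc : 0 ≤ c) {x : E} (hx : 0 ≤ x) : 0 ≤ c • x := by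
  -- first, for nonnegative rationals of the form a / b
  have hrat : ∀ a b : ℕ, 0 < b → 0 ≤ ((a : ℝ) / (b : ℝ)) • x := by
    intro a b hb
    apply nonneg_of_nsmul_nonneg hb (y := ((a : ℝ) / (b : ℝ)) • x)
    have : (b : ℕ) • (((a : ℝ) / (b : ℝ)) • x) = (a : ℕ) • x := by
      rw [← Nat.cast_smul_eq_nsmul ℝ b, ← Nat.cast_smul_eq_nsmul ℝ a, smul_smul]
      congr 1
      field_simp
    rw [this]
    exact nsmul_nonneg hx a
  -- approximate `c` from above by such rationals
  set s : ℕ → ℝ := fun n => (⌈c * (n + 1)⌉₊ : ℝ) / ((n : ℝ) + 1) with hs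
  have hs_ge : ∀ n, c ≤ s n := by
    intro n
    rw [hs]
    rw [le_div_iff₀ (by positivity)]
    exact Nat.le_ceil _
  have hs_le : ∀ n, s n ≤ c + 1 / ((n : ℝ) + 1) := by
    intro n
    rw [hs]
    rw [div_le_iff₀ (by positivity)]
    have h1 : (⌈c * ((n : ℝ) + 1)⌉₊ : ℝ) < c * ((n : ℝ) + 1) + 1 :=
      Nat.ceil_lt_add_one (by positivity)
    have : (c + 1 / ((n : ℝ) + 1)) * ((n : ℝ) + 1) = c * ((n : ℝ) + 1) + 1 := by
      field_simp
    rw [this]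
    exact h1.le
  have hs_tendsto : Tendsto s atTop (nhds c) := by
    have hup : Tendsto (fun n : ℕ => c + 1 / ((n : ℝ) + 1)) atTop (nhds c) := by
      have := tendsto_one_div_add_atTop_nhds_zero_nat (𝕜 := ℝ)
      have h2 := (tendsto_const_nhds (x := c) (f := atTop (α := ℕ))).add this
      simpa using h2
    exact tendsto_of_tendsto_of_tendsto_of_le_of_le tendsto_const_nhds hup hs_ge hs_le
  have hmem : ∀ n, s n • x ∈ Set.Ici (0 : E) := by
    intro n
    have : s n = ((⌈c * (n + 1)⌉₊ : ℕ) : ℝ) / (((n + 1 : ℕ) : ℕ) : ℝ) := by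
      rw [hs]; push_cast; ring_nf
    rw [this]
    exact hrat _ _ (Nat.succ_pos n)
  have hlim : Tendsto (fun n => s n • x) atTop (nhds (c • x)) := hs_tendsto.smul_const x
  exact isClosed_Ici.mem_of_tendsto hlim (Filter.Eventually.of_forall hmem)

lemma real_smul_le_smul {c : ℝ} (hc : 0 ≤ c) {a b : E} (h : a ≤ b) : c • a ≤ c • b := by
  have := real_smul_nonneg hc (sub_nonneg.mpr h)
  rw [smul_sub] at this
  exact sub_nonneg.mp this

lemma smul_le_smul_scalar {a b : ℝ} (h : a ≤ b) {e : E} (he : 0 ≤ e) : a • e ≤ b • e := by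
  have := real_smul_nonneg (sub_nonneg.mpr h) he
  rw [sub_smul] at this
  exact sub_nonneg.mp this

lemma abs_real_smul_le {c : ℝ} (hc : 0 ≤ c) (z : E) : |c • z| ≤ c • |z| := by
  simp only [abs]
  refine sup_le ?_ ?_
  · exact (real_smul_le_smul hc le_sup_left)
  · rw [← smul_neg]
    exact real_smul_le_smul hc le_sup_right

end Aux

set_option maxHeartbeats 1600000 in
/-- If `E` is a Banach lattice with a strong order unit and order continuous norm and
`F` is a Dedekind complete Banach lattice, then every bounded linear operator
`T : E → F` is a KB-operator. -/
theorem all_bounded_isKB_of_unit_orderContinuous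
    {E F : Type*} [NormedAddCommGroup E] [Lattice E] [HasSolidNorm E] [IsOrderedAddMonoid E] [NormedSpace ℝ E] [CompleteSpace E]
    [NormedAddCommGroup F] [Lattice F] [HasSolidNorm F] [IsOrderedAddMonoid F] [NormedSpace ℝ F] [CompleteSpace F]
    -- `E` has a strong order unit `e`:
    (e : E) (he : 0 ≤ e) (hunit : ∀ x : E, ∃ lam : ℝ, 0 < lam ∧ |x| ≤ lam • e)
    -- `E` has order continuous norm:
    (hoc : ∀ A : Set E, A.Nonempty → DirectedOn (· ≥ ·) A → IsGLB A 0 →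
      ∀ ε > (0 : ℝ), ∃ a ∈ A, ‖a‖ < ε)
    -- `F` is Dedekind complete:
    (hDed : ∀ A : Set F, A.Nonempty → BddAbove A → ∃ l : F, IsLUB A l)
    (T : E →L[ℝ] F) :
    ∀ x : ℕ → E, (∀ n, 0 ≤ x n) → Monotone x → (∀ n, ‖x n‖ ≤ 1) →
      ∃ φ : ℕ → ℕ, StrictMono φ ∧ ∃ y : F,
        Tendsto (fun n => T (x (φ n))) atTop (nhds y) := by
  intro x hx hmono hnorm
  -- Step 1: a uniform bound `x k ≤ c • e` using Baire category.
  have habs_cont : Continuous fun y : E => |y| := by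
    simp only [abs]; exact continuous_id.sup continuous_neg
  have hC : ∀ n : ℕ, IsClosed {y : E | |y| ≤ (n : ℝ) • e} := fun n =>
    isClosed_le habs_cont continuous_const
  have hcover : ⋃ n : ℕ, {y : E | |y| ≤ (n : ℝ) • e} = Set.univ := by
    ext y
    simp only [Set.mem_iUnion, Set.mem_setOf_eq, Set.mem_univ, iff_true]
    obtain ⟨lam, hlam, hle⟩ := hunit y
    exact ⟨⌈lam⌉₊, hle.trans (smul_le_smul_scalar (Nat.le_ceil lam) he)⟩
  obtain ⟨n, hn⟩ := nonempty_interior_of_iUnion_of_closed hC hcover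
  obtain ⟨x₀, hx₀⟩ := hn
  obtain ⟨r, hr, hball⟩ := Metric.mem_nhds_iff.mp (isOpen_interior.mem_nhds hx₀)
  have hball' : Metric.ball x₀ r ⊆ {y : E | |y| ≤ (n : ℝ) • e} :=
    hball.trans interior_subset
  have hx₀mem : |x₀| ≤ (n : ℝ) • e := hball' (Metric.mem_ball_self hr)
  set c : ℝ := (2 / r) * (2 * n) with hc
  have hbound : ∀ y : E, ‖y‖ ≤ 1 → |y| ≤ c • e := by
    intro y hy
    have hmem : x₀ + (r / 2) • y ∈ Metric.ball x₀ r := by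
      rw [Metric.mem_ball, dist_eq_norm]
      have : x₀ + (r / 2) • y - x₀ = (r / 2) • y := by abel
      rw [this, norm_smul]
      have : ‖(r / 2 : ℝ)‖ = r / 2 := by
        rw [Real.norm_eq_abs, abs_of_pos (by linarith)]
      rw [this]
      nlinarith [norm_nonneg y]
    have h1 : |x₀ + (r / 2) • y| ≤ (n : ℝ) • e := hball' hmem
    have h2 : |(r / 2) • y| ≤ (n : ℝ) • e + (n : ℝ) • e := by
      have : (r / 2) • y = (x₀ + (r / 2) • y) + (-x₀) := by abel
      rw [this]
      calc |(x₀ + (r / 2) • y) + (-x₀)| ≤ |x₀ + (r / 2) • y| + |(-x₀)| := abs_add_le _ _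
        _ = |x₀ + (r / 2) • y| + |x₀| := by rw [abs_neg]
        _ ≤ (n : ℝ) • e + (n : ℝ) • e := add_le_add h1 hx₀mem
    have hr2 : (0 : ℝ) ≤ 2 / r := by positivity
    have h3 : |y| ≤ (2 / r) • ((n : ℝ) • e + (n : ℝ) • e) := by
      have hyeq : y = (2 / r) • ((r / 2) • y) := by
        rw [smul_smul]
        have : (2 / r) * (r / 2) = 1 := by field_simp
        rw [this, one_smul]
      calc |y| = |(2 / r) • ((r / 2) • y)| := by rw [← hyeq]
        _ ≤ (2 / r) • |(r / 2) • y| := abs_real_smul_le hr2 _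
        _ ≤ (2 / r) • ((n : ℝ) • e + (n : ℝ) • e) := real_smul_le_smul hr2 h2
    have heq : (2 / r) • ((n : ℝ) • e + (n : ℝ) • e) = c • e := by
      rw [hc, smul_add, smul_smul, ← add_smul]
      congr 1
      ring
    rwa [heq] at h3
  have hbd : ∀ k, x k ≤ c • e := fun k =>
    (le_abs_self _).trans (hbound (x k) (hnorm k))
  -- Step 2: the sequence is Cauchy.
  set u : E := c • e with hu_def
  set D : Set E := {z : E | (∀ k, x k ≤ z) ∧ z ≤ u} with hD
  set A : Set E := {w : E | ∃ z ∈ D, ∃ k, w = z - x k} with hA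
  have huD : u ∈ D := ⟨hbd, le_refl u⟩
  have hAne : A.Nonempty := ⟨u - x 0, u, huD, 0, rfl⟩
  have hdir : DirectedOn (· ≥ ·) A := by
    rintro a ⟨z₁, hz₁, k₁, rfl⟩ b ⟨z₂, hz₂, k₂, rfl⟩
    refine ⟨z₁ ⊓ z₂ - x (max k₁ k₂), ⟨z₁ ⊓ z₂,
      ⟨fun k => le_inf (hz₁.1 k) (hz₂.1 k), inf_le_left.trans hz₁.2⟩, max k₁ k₂, rfl⟩, ?_, ?_⟩
    · exact sub_le_sub inf_le_left (hmono (le_max_left _ _))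
    · exact sub_le_sub inf_le_right (hmono (le_max_right _ _))
  have hglb : IsGLB A 0 := by
    constructor
    · rintro w ⟨z, hz, k, rfl⟩
      exact sub_nonneg.mpr (hz.1 k)
    · intro v hv
      -- `v` is a lower bound of `A`; show `v ≤ 0`.
      have claim : ∀ m : ℕ, ∀ z ∈ D, ∀ k, x k + m • v⁺ ≤ z := by
        intro m
        induction m with
        | zero => intro z hz k; simpa using hz.1 k
        | succ m ih =>
            intro z hz k
            have hz' : z - m • v⁺ ∈ D := by
              refine ⟨fun j => ?_, ?_⟩
              · exact le_sub_iff_add_le.mpr (ih z hz j)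
              · exact (sub_le_self _ (nsmul_nonneg (posPart_nonneg v) m)).trans hz.2
            have hmemA : (z - m • v⁺) - x k ∈ A := ⟨z - m • v⁺, hz', k, rfl⟩
            have h1 : x k + v ≤ z - m • v⁺ := by
              have hvle := le_sub_iff_add_le.mp (hv hmemA)
              rwa [add_comm] at hvle
            have h2 : x k ≤ z - m • v⁺ := hz'.1 k
            have h3 : x k + v⁺ ≤ z - m • v⁺ := by
              have hsup : x k + v⁺ = (x k + v) ⊔ (x k + 0) := by
                rw [← add_sup]; rfl
              rw [hsup]
              exact sup_le h1 (by simpa using h2)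
            calc x k + (m + 1) • v⁺ = (x k + v⁺) + m • v⁺ := by
                  rw [succ_nsmul]; abel
              _ ≤ (z - m • v⁺) + m • v⁺ := add_le_add_left h3 _
              _ = z := by abel
      have hms : ∀ m : ℕ, m • v⁺ ≤ u - x 0 := by
        intro m
        have hcl := claim m u huD 0
        rw [add_comm] at hcl
        exact le_sub_iff_add_le.mpr hcl
      have hux0 : (0 : E) ≤ u - x 0 := sub_nonneg.mpr (hbd 0)
      have hnrm : ∀ m : ℕ, ‖v⁺‖ ≤ (1 / ((m : ℝ) + 1)) * ‖u - x 0‖ := by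
        intro m
        have hmpos : (0 : ℝ) < (m : ℝ) + 1 := by positivity
        have h1 : v⁺ ≤ ((1 : ℝ) / ((m : ℝ) + 1)) • (u - x 0) := by
          have h2 := real_smul_le_smul (le_of_lt (by positivity : (0:ℝ) < 1 / ((m : ℝ) + 1)))
            (hms (m + 1))
          rwa [← Nat.cast_smul_eq_nsmul ℝ (m + 1) v⁺, smul_smul,
            (by push_cast; field_simp : (1 : ℝ) / ((m : ℝ) + 1) * ((m : ℕ) + 1 : ℕ) = 1),
            one_smul] at h2
        have habs : |v⁺| ≤ |((1 : ℝ) / ((m : ℝ) + 1)) • (u - x 0)| := by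
          rw [abs_of_nonneg (posPart_nonneg v),
            abs_of_nonneg (real_smul_nonneg (by positivity) hux0)]
          exact h1
        have := HasSolidNorm.solid habs
        rwa [norm_smul, Real.norm_eq_abs, abs_of_pos (by positivity)] at this
      have hzero : ‖v⁺‖ ≤ 0 := by
        have htend : Tendsto (fun m : ℕ => (1 / ((m : ℝ) + 1)) * ‖u - x 0‖) atTop (nhds 0) := by
          have := (tendsto_one_div_add_atTop_nhds_zero_nat (𝕜 := ℝ)).mul_const ‖u - x 0‖
          simpa using this
        exact ge_of_tendsto' htend hnrm
      have : v⁺ = 0 := norm_eq_zero.mp (le_antisymm hzero (norm_nonneg _))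
      calc v ≤ v⁺ := le_sup_left
        _ = 0 := this
  have hcauchy : CauchySeq x := by
    rw [Metric.cauchySeq_iff']
    intro ε hε
    obtain ⟨w, hw, hwn⟩ := hoc A hAne hdir hglb ε hε
    obtain ⟨z, hz, k, rfl⟩ := hw
    refine ⟨k, fun m hm => ?_⟩
    rw [dist_eq_norm]
    have h1 : (0 : E) ≤ x m - x k := sub_nonneg.mpr (hmono hm)
    have h2 : x m - x k ≤ z - x k := sub_le_sub_right (hz.1 m) _
    have habs : |x m - x k| ≤ |z - x k| := by
      rw [abs_of_nonneg h1, abs_of_nonneg (h1.trans h2)]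
      exact h2
    exact lt_of_le_of_lt (HasSolidNorm.solid habs) hwn
  obtain ⟨y, hy⟩ := cauchySeq_tendsto_of_complete hcauchy
  exact ⟨id, strictMono_id, T y, (T.continuous.tendsto y).comp hy⟩
end
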